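/- The exceptional curve V₁ = {x = 0} is sent by f to the exceptional fiber V₃ with coordinate t₃ = t₁ − 1: for all a, b ∈ ℂ and every y ∈ ℂ with y ≠ 0, the product (f₁(x, y) − 1)·(f₂(x, y) − 1) tends to y − 1 as x → 0 (the limit taken along nonzero x for which f is defined at (x,y)). -/
import Mathlib


open Filter

/-- First component of the birational map `f = f_{a,b}`. -/
noncomputable def f1 (x y : ℂ) : ℂ := 1 - x + x / y

/-- Second component of the birational map `f = f_{a,b}`. -/
noncomputable def f2 (a b x y : ℂ) : ℂ := b * f1 x y + a + y - y / x

/-- The exceptional curve `V₁ = {x = 0}` is sent by `f` to the exceptional fiber `V₃`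
with coordinate `t₃ = t₁ - 1`: as `x → 0` along nonzero `x`, the quantity
`(f₁(x,y) - 1)·(f₂(x,y) - 1)`, recording the `t₃`-coordinate of the image, tends to `y - 1`. -/
theorem V1_to_V3 (a b : ℂ) (y : ℂ) (hy : y ≠ 0) :
    Tendsto (fun x : ℂ => (f1 x y - 1) * (f2 a b x y - 1)) (nhdsWithin 0 {x : ℂ | x ≠ 0})
      (nhds (y - 1)) := by
  set g : ℂ → ℂ := fun x =>
    (f1 x y - 1) * (b * f1 x y + a + y - 1) + (y - 1) with hg
  have hcontg : Continuous g := by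
    have hf1 : Continuous fun x : ℂ => f1 x y := by
      unfold f1; continuity
    unfold g
    continuity
  have hg0 : g 0 = y - 1 := by
    simp [hg, f1]
  have htg : Tendsto g (nhdsWithin 0 {x : ℂ | x ≠ 0}) (nhds (y - 1)) := by
    rw [← hg0]
    exact (hcontg.tendsto 0).mono_left nhdsWithin_le_nhds
  refine htg.congr' ?_
  filter_upwards [self_mem_nhdsWithin] with x hx
  have hx : x ≠ 0 := hx
  simp only [hg, f1, f2]
  field_simp
  ring
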